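/- Let G and Y be finite sets with |G| = n_G and |Y| = n_Y, where n_Y divides n_G and n_Y ≥ 2. Let a : G → ℝ and b : Y → ℝ, fix y ∈ Y and a subset F ⊆ G with |F| = n_G / n_Y. Suppose: (i) |a(g) + b(y')| ≤ δ for all g ∈ F and all y' ≠ y; (ii) |a(g') + b(y)| ≤ δ for all g' ∉ F; (iii) ∑_{g ∈ G} a(g) = ∑_{y' ∈ Y} b(y'); and (iv) |a(g1) − a(g2)| ≤ δ for all g1, g2 ∈ F. Then for every g ∈ F, |(1 + (n_G/n_Y)(n_Y − 1)) · b(y) − (n_Y − 1 + n_G/n_Y) · a(g)| ≤ C · n_G · δ for some absolute constant C. -/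
import Mathlib


/-- Asymmetric feature ratio in the symmetry-group case: there is an absolute
constant `C` such that for any fiber `F` of size `n_G / n_Y`, cancellation of
confounding features, the equal-sum constraint, and near-equality within the
fiber force the ratio `C_α = (1 + (n_G/n_Y)(n_Y−1)) / ((n_Y−1) + n_G/n_Y)`
between `b y` and `a g` up to error `C · n_G · δ`. -/
theorem stmt_5 : ∃ C : ℝ, 0 < C ∧
    ∀ (G Y : Type) [Fintype G] [Fintype Y] (nG nY : ℕ),
      Fintype.card G = nG → Fintype.card Y = nY → nY ∣ nG → 2 ≤ nY →
      ∀ (a : G → ℝ) (b : Y → ℝ) (y : Y) (F : Finset G) (δ : ℝ), 0 ≤ δ →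
      F.card = nG / nY →
      (∀ g ∈ F, ∀ y' : Y, y' ≠ y → |a g + b y'| ≤ δ) →
      (∀ g' : G, g' ∉ F → |a g' + b y| ≤ δ) →
      (∑ g : G, a g = ∑ y' : Y, b y') →
      (∀ g1 ∈ F, ∀ g2 ∈ F, |a g1 - a g2| ≤ δ) →
      ∀ g ∈ F,
        |(1 + ((nG : ℝ) / nY) * ((nY : ℝ) - 1)) * b y
            - (((nY : ℝ) - 1) + (nG : ℝ) / nY) * a g| ≤ C * nG * δ := by
  refine ⟨2, by norm_num, ?_⟩
  intro G Y _ _ nG nY hG hY hdvd hnY a b y F δ hδ hF h1 h2 hsum h4 g hg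
  classical
  have hnY0 : (0:ℝ) < (nY:ℝ) := by
    have : 0 < nY := by omega
    exact_mod_cast this
  have hnG1 : 1 ≤ nG := by
    have : F.Nonempty := ⟨g, hg⟩
    have := Finset.card_pos.mpr this
    have hle : F.card ≤ Fintype.card G := F.card_le_univ
    omega
  have hnYnG : nY ≤ nG := Nat.le_of_dvd (by omega) hdvd
  have hFnG : F.card ≤ nG := by rw [← hG]; exact F.card_le_univ
  have hM : (F.card : ℝ) = (nG:ℝ)/(nY:ℝ) := by
    rw [eq_div_iff (ne_of_gt hnY0)]
    have : F.card * nY = nG := by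
      rw [hF]; exact Nat.div_mul_cancel hdvd
    exact_mod_cast this
  -- E1
  have E1 : |∑ g' ∈ F, a g' - (F.card : ℝ) * a g| ≤ (F.card : ℝ) * δ := by
    have heq : ∑ g' ∈ F, a g' - (F.card : ℝ) * a g = ∑ g' ∈ F, (a g' - a g) := by
      rw [Finset.sum_sub_distrib, Finset.sum_const, nsmul_eq_mul]
    rw [heq]
    calc |∑ g' ∈ F, (a g' - a g)| ≤ ∑ g' ∈ F, |a g' - a g| :=
          Finset.abs_sum_le_sum_abs _ _
      _ ≤ ∑ _g' ∈ F, δ := Finset.sum_le_sum fun i hi => h4 i hi g hg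
      _ = (F.card : ℝ) * δ := by rw [Finset.sum_const, nsmul_eq_mul]
  -- E2
  have E2 : |∑ g' ∈ Fᶜ, (a g' + b y)| ≤ (Fᶜ.card : ℝ) * δ := by
    calc |∑ g' ∈ Fᶜ, (a g' + b y)| ≤ ∑ g' ∈ Fᶜ, |a g' + b y| :=
          Finset.abs_sum_le_sum_abs _ _
      _ ≤ ∑ _g' ∈ Fᶜ, δ := Finset.sum_le_sum fun i hi =>
          h2 i (Finset.mem_compl.mp hi)
      _ = (Fᶜ.card : ℝ) * δ := by rw [Finset.sum_const, nsmul_eq_mul]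
  -- E3
  have E3 : |∑ y' ∈ Finset.univ.erase y, (b y' + a g)| ≤ ((nY:ℝ) - 1) * δ := by
    have hcard : ((Finset.univ.erase y).card : ℝ) = (nY:ℝ) - 1 := by
      rw [Finset.card_erase_of_mem (Finset.mem_univ y), Finset.card_univ, hY]
      have : 1 ≤ nY := by omega
      push_cast [this]
      ring
    calc |∑ y' ∈ Finset.univ.erase y, (b y' + a g)|
        ≤ ∑ y' ∈ Finset.univ.erase y, |b y' + a g| := Finset.abs_sum_le_sum_abs _ _
      _ ≤ ∑ _y' ∈ Finset.univ.erase y, δ := Finset.sum_le_sum fun i hi => by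
          have := h1 g hg i (Finset.ne_of_mem_erase hi)
          rwa [add_comm] at this
      _ = ((nY:ℝ) - 1) * δ := by rw [Finset.sum_const, nsmul_eq_mul, hcard]
  have hsplitG : ∑ g' : G, a g' = ∑ g' ∈ F, a g' + ∑ g' ∈ Fᶜ, a g' :=
    (Finset.sum_add_sum_compl F a).symm
  have hsplitY : ∑ y' : Y, b y' = b y + ∑ y' ∈ Finset.univ.erase y, b y' :=
    (Finset.add_sum_erase _ _ (Finset.mem_univ y)).symm
  have hcc : (Fᶜ.card : ℝ) = (nG:ℝ) - F.card := by
    have : Fᶜ.card = Fintype.card G - F.card := Finset.card_compl F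
    rw [this, hG]
    push_cast [hFnG]
    ring
  have hsum2 : ∑ g' ∈ Fᶜ, (a g' + b y) = ∑ g' ∈ Fᶜ, a g' + (Fᶜ.card : ℝ) * b y := by
    rw [Finset.sum_add_distrib, Finset.sum_const, nsmul_eq_mul]
  have hsum3 : ∑ y' ∈ Finset.univ.erase y, (b y' + a g)
      = ∑ y' ∈ Finset.univ.erase y, b y' + ((nY:ℝ) - 1) * a g := by
    rw [Finset.sum_add_distrib, Finset.sum_const, nsmul_eq_mul]
    congr 1
    congr 1
    rw [Finset.card_erase_of_mem (Finset.mem_univ y), Finset.card_univ, hY]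
    have : 1 ≤ nY := by omega
    push_cast [this]
    ring
  have key : (1 + ((nG : ℝ) / nY) * ((nY : ℝ) - 1)) * b y
      - (((nY : ℝ) - 1) + (nG : ℝ) / nY) * a g
      = (∑ g' ∈ F, a g' - (F.card : ℝ) * a g)
        - (∑ y' ∈ Finset.univ.erase y, (b y' + a g))
        + (∑ g' ∈ Fᶜ, (a g' + b y)) := by
    rw [hsum2, hsum3, hcc, ← hM]
    have hMnY : (F.card : ℝ) * (nY:ℝ) = (nG:ℝ) := by
      rw [hM]; field_simp
    have hS : ∑ g' ∈ F, a g' + ∑ g' ∈ Fᶜ, a g'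
        = b y + ∑ y' ∈ Finset.univ.erase y, b y' := by
      rw [← hsplitG, ← hsplitY]; exact hsum
    linear_combination b y * hMnY - hS
  rw [key]
  have hcard_sum : (F.card : ℝ) + (Fᶜ.card : ℝ) = (nG:ℝ) := by
    rw [hcc]; ring
  have hbound : ((nY:ℝ) - 1) ≤ (nG:ℝ) := by
    have : (nY:ℝ) ≤ (nG:ℝ) := by exact_mod_cast hnYnG
    linarith
  calc |(∑ g' ∈ F, a g' - (F.card : ℝ) * a g)
        - (∑ y' ∈ Finset.univ.erase y, (b y' + a g))
        + (∑ g' ∈ Fᶜ, (a g' + b y))|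
      ≤ |(∑ g' ∈ F, a g' - (F.card : ℝ) * a g)
        - (∑ y' ∈ Finset.univ.erase y, (b y' + a g))|
        + |∑ g' ∈ Fᶜ, (a g' + b y)| := abs_add_le _ _
    _ ≤ (|∑ g' ∈ F, a g' - (F.card : ℝ) * a g|
        + |∑ y' ∈ Finset.univ.erase y, (b y' + a g)|)
        + |∑ g' ∈ Fᶜ, (a g' + b y)| := by gcongr; exact abs_sub _ _
    _ ≤ ((F.card : ℝ) * δ + ((nY:ℝ) - 1) * δ) + (Fᶜ.card : ℝ) * δ := by
        gcongr
    _ ≤ 2 * nG * δ := by nlinarith
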